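/- Let p be a prime with p ≠ 3, and let a, b be integers not divisible by p. If b·a^{-1} is a cubic residue modulo p, then the set of ratios R(C) = { C(x,y)/C(z,w) : x,y,z,w ∈ Z, C(z,w) ≠ 0 } of the form C(x,y) = a x^3 + b y^3 is dense in Q_p. -/

import Mathlib

section Aux

open Polynomial

variable {p : ℕ} [Fact p.Prime]

lemma aux_norm_int_eq_one {k : ℤ} (hk : ¬ (p : ℤ) ∣ k) : ‖(k : ℤ_[p])‖ = 1 :=
  le_antisymm (PadicInt.norm_le_one _)
    (le_of_not_gt fun h => hk ((PadicInt.norm_int_lt_one_iff_dvd k).mp h))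

lemma aux_not_dvd_three (hp3 : p ≠ 3) : ¬ (p : ℤ) ∣ (3 : ℤ) := by
  intro h
  have h3 : p ∣ 3 := by exact_mod_cast h
  rcases (Nat.prime_three.eq_one_or_self_of_dvd p h3) with h1 | h1
  · exact (Fact.out : p.Prime).one_lt.ne' h1
  · exact hp3 h1

lemma aux_not_one : ¬ (p : ℤ) ∣ (1 : ℤ) := by
  intro h
  have : p ∣ 1 := by exact_mod_cast h
  exact (Fact.out : p.Prime).one_lt.ne' (Nat.eq_one_of_dvd_one this)

/-- Existence of a cube root: there is `τ : ℤ_[p]` with `a τ³ = b`. -/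
lemma aux_exists_tau (hp3 : p ≠ 3) (a b a' : ℤ)
    (ha : ¬ (p : ℤ) ∣ a) (hb : ¬ (p : ℤ) ∣ b) (ha' : a * a' ≡ 1 [ZMOD (p : ℤ)])
    (hres : ∃ x : ℤ, x ^ 3 ≡ b * a' [ZMOD (p : ℤ)]) :
    ∃ τ : ℤ_[p], (a : ℤ_[p]) * τ ^ 3 = (b : ℤ_[p]) ∧ ‖τ‖ = 1 := by
  obtain ⟨x₀, hx₀⟩ := hres
  have ha'1 : ¬ (p : ℤ) ∣ a' := by
    intro h
    have hd : (p : ℤ) ∣ a * a' - 1 := (Int.ModEq.dvd ha'.symm)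
    have : (p : ℤ) ∣ (1 : ℤ) := by
      have : (p : ℤ) ∣ a * a' := h.mul_left a
      have := dvd_sub this hd
      simpa using this
    exact aux_not_one this
  have hx₀p : ¬ (p : ℤ) ∣ x₀ := by
    intro h
    have h3 : (p : ℤ) ∣ x₀ ^ 3 := dvd_pow h (by norm_num)
    have hd : (p : ℤ) ∣ b * a' - x₀ ^ 3 := Int.ModEq.dvd hx₀
    have : (p : ℤ) ∣ b * a' := by
      have := dvd_add hd h3
      simpa using this
    rcases ((Nat.prime_iff_prime_int.mp (Fact.out : p.Prime)).dvd_mul.mp this) with h' | h'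
    · exact hb h'
    · exact ha'1 h'
  -- p divides a x₀³ - b
  have hdvd : (p : ℤ) ∣ a * x₀ ^ 3 - b := by
    have h1 : a * x₀ ^ 3 ≡ a * (b * a') [ZMOD (p : ℤ)] := hx₀.mul_left a
    have h2 : a * (b * a') - b = b * (a * a' - 1) := by ring
    have h3 : (p : ℤ) ∣ a * (b * a') - b := by
      rw [h2]; exact (Int.ModEq.dvd ha'.symm).mul_left b
    have h4 : (p : ℤ) ∣ a * (b * a') - a * x₀ ^ 3 := Int.ModEq.dvd h1
    have := dvd_sub h3 h4
    simpa using this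
  -- Hensel's lemma applied to F = a X³ - b at x₀
  set F : Polynomial ℤ_[p] := C (a : ℤ_[p]) * X ^ 3 + C (-(b : ℤ_[p])) with hF
  have heval : F.eval (x₀ : ℤ_[p]) = ((a * x₀ ^ 3 - b : ℤ) : ℤ_[p]) := by
    simp [hF]; push_cast; ring
  have hevalnorm : ‖F.eval (x₀ : ℤ_[p])‖ < 1 := by
    rw [heval]
    exact (PadicInt.norm_int_lt_one_iff_dvd _).mpr hdvd
  have hder : F.derivative.eval (x₀ : ℤ_[p]) = (a : ℤ_[p]) * (3 * (x₀ : ℤ_[p]) ^ 2) := by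
    simp [hF]
    norm_num
  have hdernorm : ‖F.derivative.eval (x₀ : ℤ_[p])‖ = 1 := by
    rw [hder, norm_mul, norm_mul, aux_norm_int_eq_one ha]
    have h3 : ‖(3 : ℤ_[p])‖ = 1 := by
      have : ((3 : ℤ) : ℤ_[p]) = (3 : ℤ_[p]) := by norm_cast
      rw [← this]; exact aux_norm_int_eq_one (aux_not_dvd_three hp3)
    rw [h3, norm_pow, aux_norm_int_eq_one hx₀p]
    norm_num
  have hnorm : ‖F.eval (x₀ : ℤ_[p])‖ < ‖F.derivative.eval (x₀ : ℤ_[p])‖ ^ 2 := by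
    rw [hdernorm]; simpa using hevalnorm
  obtain ⟨τ, hroot, -⟩ := hensels_lemma hnorm
  have hre : (a : ℤ_[p]) * τ ^ 3 = (b : ℤ_[p]) := by
    have h0 : (a : ℤ_[p]) * τ ^ 3 + (-(b : ℤ_[p])) = 0 := by simpa [hF] using hroot
    linear_combination h0
  refine ⟨τ, hre, ?_⟩
  have hnb : ‖(b : ℤ_[p])‖ = 1 := aux_norm_int_eq_one hb
  have hna : ‖(a : ℤ_[p])‖ = 1 := aux_norm_int_eq_one ha
  have h1 : ‖τ‖ ^ 3 = 1 := by
    have := congrArg norm hre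
    rw [norm_mul, hna, hnb, one_mul, norm_pow] at this
    exact this
  nlinarith [norm_nonneg τ, sq_nonneg (‖τ‖ - 1), sq_nonneg (‖τ‖ + 1)]

/-- Values `a x³ + b`, `x ∈ ℤ`, approximate any `s ∈ ℤ_[p]` with `‖s‖ < 1`. -/
lemma aux_approx (hp3 : p ≠ 3) (a b : ℤ) (ha : ¬ (p : ℤ) ∣ a)
    (τ : ℤ_[p]) (hτ : (a : ℤ_[p]) * τ ^ 3 = (b : ℤ_[p])) (hτ1 : ‖τ‖ = 1)
    (s : ℤ_[p]) (hs : ‖s‖ < 1) {δ : ℝ} (hδ : 0 < δ) :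
    ∃ x : ℤ, ‖((a * x ^ 3 + b : ℤ) : ℤ_[p]) - s‖ < δ := by
  set F : Polynomial ℤ_[p] := C (a : ℤ_[p]) * X ^ 3 + C ((b : ℤ_[p]) - s) with hF
  have heval : F.eval (-τ) = -s := by
    simp only [hF, Polynomial.eval_add, Polynomial.eval_mul, Polynomial.eval_C,
      Polynomial.eval_pow, Polynomial.eval_X]
    have : (a : ℤ_[p]) * (-τ) ^ 3 = -((a : ℤ_[p]) * τ ^ 3) := by ring
    rw [this, hτ]; ring
  have hder : F.derivative.eval (-τ) = (a : ℤ_[p]) * (3 * (-τ) ^ 2) := by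
    simp [hF]
    norm_num
  have hdernorm : ‖F.derivative.eval (-τ)‖ = 1 := by
    rw [hder, norm_mul, norm_mul, aux_norm_int_eq_one ha]
    have h3 : ‖(3 : ℤ_[p])‖ = 1 := by
      have : ((3 : ℤ) : ℤ_[p]) = (3 : ℤ_[p]) := by norm_cast
      rw [← this]; exact aux_norm_int_eq_one (aux_not_dvd_three hp3)
    rw [h3, norm_pow, norm_neg, hτ1]
    norm_num
  have hnorm : ‖F.eval (-τ)‖ < ‖F.derivative.eval (-τ)‖ ^ 2 := by
    rw [hdernorm, heval, norm_neg]; simpa using hs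
  obtain ⟨ξ, hroot, -⟩ := hensels_lemma hnorm
  have hre : (a : ℤ_[p]) * ξ ^ 3 + (b : ℤ_[p]) = s := by
    have h0 : (a : ℤ_[p]) * ξ ^ 3 + ((b : ℤ_[p]) - s) = 0 := by simpa [hF] using hroot
    linear_combination h0
  obtain ⟨x, hx⟩ := PadicInt.denseRange_intCast.exists_dist_lt ξ hδ
  refine ⟨x, ?_⟩
  have key : ((a * x ^ 3 + b : ℤ) : ℤ_[p]) - s
      = (a : ℤ_[p]) * (((x : ℤ_[p]) - ξ) * ((x : ℤ_[p]) ^ 2 + (x : ℤ_[p]) * ξ + ξ ^ 2)) := by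
    rw [← hre]; push_cast; ring
  rw [key, norm_mul, aux_norm_int_eq_one ha, one_mul, norm_mul]
  have hb1 : ‖(x : ℤ_[p]) - ξ‖ * ‖(x : ℤ_[p]) ^ 2 + (x : ℤ_[p]) * ξ + ξ ^ 2‖
      ≤ ‖(x : ℤ_[p]) - ξ‖ :=
    mul_le_of_le_one_right (norm_nonneg _) (PadicInt.norm_le_one _)
  have hb2 : ‖(x : ℤ_[p]) - ξ‖ < δ := by
    have hrw : dist ξ ((x : ℤ) : ℤ_[p]) = ‖(x : ℤ_[p]) - ξ‖ := by
      rw [dist_eq_norm, norm_sub_rev]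
    rwa [hrw] at hx
  exact lt_of_le_of_lt hb1 hb2

end Aux

/-- For a prime `p ≠ 3` with `p ∤ ab`, if `b·a⁻¹` is a cubic residue modulo `p`,
then the ratio set of `C(x,y) = a x^3 + b y^3` is dense in `ℚ_p`. -/
theorem stmt_4 (p : ℕ) [Fact p.Prime] (hp3 : p ≠ 3) (a b a' : ℤ)
    (ha : ¬ (p : ℤ) ∣ a) (hb : ¬ (p : ℤ) ∣ b) (ha' : a * a' ≡ 1 [ZMOD (p : ℤ)])
    (hres : ∃ x : ℤ, x ^ 3 ≡ b * a' [ZMOD (p : ℤ)]) :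
    Dense {q : ℚ_[p] | ∃ x y z w : ℤ, a * z ^ 3 + b * w ^ 3 ≠ 0 ∧
      q = ((a * x ^ 3 + b * y ^ 3 : ℤ) : ℚ_[p]) / ((a * z ^ 3 + b * w ^ 3 : ℤ) : ℚ_[p])} := by
  obtain ⟨τ, hτ, hτ1⟩ := aux_exists_tau hp3 a b a' ha hb ha' hres
  rw [Metric.dense_iff]
  intro c ε hε
  -- choose m with ‖c‖ * p⁻ᵐ < 1 and m ≥ 1
  have hp1 : (1 : ℝ) < p := by exact_mod_cast (Fact.out : p.Prime).one_lt
  have hpinv : (p : ℝ)⁻¹ < 1 := by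
    rw [inv_lt_one_iff₀]; right; exact hp1
  have hpinvpos : (0 : ℝ) < (p : ℝ)⁻¹ := by positivity
  obtain ⟨n, hn⟩ := exists_pow_lt_of_lt_one
    (show (0:ℝ) < 1 / (‖c‖ + 1) by positivity) hpinv
  set m : ℕ := n + 1 with hm
  have hmle : ((p : ℝ)⁻¹) ^ m ≤ ((p : ℝ)⁻¹) ^ n :=
    pow_le_pow_of_le_one (le_of_lt hpinvpos) (le_of_lt hpinv) (by omega)
  have hcm : ‖c‖ * ((p : ℝ)⁻¹) ^ m < 1 := by
    have hpos : (0:ℝ) < ‖c‖ + 1 := by positivity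
    have h1 : ((p : ℝ)⁻¹) ^ m < 1 / (‖c‖ + 1) := lt_of_le_of_lt hmle hn
    have h2 : ((p : ℝ)⁻¹) ^ m * (‖c‖ + 1) < 1 := (lt_div_iff₀ hpos).mp h1
    have h0 : (0:ℝ) < ((p : ℝ)⁻¹) ^ m := by positivity
    nlinarith [norm_nonneg c]
  have hpm : ‖((p : ℤ_[p]) ^ m)‖ = ((p : ℝ)⁻¹) ^ m := by
    rw [norm_pow, PadicInt.norm_p]
  have hpmpos : (0 : ℝ) < ((p : ℝ)⁻¹) ^ m := by positivity
  -- denominator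
  obtain ⟨z, hz⟩ := aux_approx hp3 a b ha τ hτ hτ1 ((p : ℤ_[p]) ^ m)
    (by
      rw [hpm]
      refine lt_of_le_of_lt hmle (lt_of_lt_of_le hn ?_)
      rw [div_le_one (by positivity : (0:ℝ) < ‖c‖ + 1)]
      linarith [norm_nonneg c]) hpmpos
  set d : ℤ := a * z ^ 3 + b with hd
  have hdnorm : ‖(d : ℤ_[p])‖ = ((p : ℝ)⁻¹) ^ m := by
    have : (d : ℤ_[p]) = ((d : ℤ_[p]) - (p : ℤ_[p]) ^ m) + (p : ℤ_[p]) ^ m := by ring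
    rw [this, PadicInt.norm_add_eq_max_of_ne, hpm]
    · exact max_eq_right (le_of_lt hz)
    · rw [hpm]; exact ne_of_lt hz
  have hdne : d ≠ 0 := by
    intro h
    rw [h] at hdnorm
    simp at hdnorm
    have hppos : (0:ℝ) < (p:ℝ) ^ m := by positivity
    first
      | linarith [hpmpos]
      | (rw [eq_comm] at hdnorm; linarith [hpmpos])
  have hdQne : ((d : ℤ) : ℚ_[p]) ≠ 0 := Int.cast_ne_zero.mpr hdne
  have hdQnorm : ‖((d : ℤ) : ℚ_[p])‖ = ((p : ℝ)⁻¹) ^ m := by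
    have : ((d : ℤ) : ℚ_[p]) = (((d : ℤ) : ℤ_[p]) : ℚ_[p]) := by norm_cast
    rw [this, ← PadicInt.norm_def, hdnorm]
  -- the target for the numerator
  have hsle : ‖c * ((d : ℤ) : ℚ_[p])‖ < 1 := by
    rw [norm_mul, hdQnorm]; exact hcm
  set S : ℤ_[p] := ⟨c * ((d : ℤ) : ℚ_[p]), le_of_lt hsle⟩ with hS
  have hSnorm : ‖S‖ < 1 := by
    rw [PadicInt.norm_def]; exact hsle
  have hδpos : (0 : ℝ) < ε * ((p : ℝ)⁻¹) ^ m := by positivity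
  obtain ⟨x, hx⟩ := aux_approx hp3 a b ha τ hτ hτ1 S hSnorm hδpos
  -- the candidate ratio
  refine ⟨((a * x ^ 3 + b * 1 ^ 3 : ℤ) : ℚ_[p]) / ((a * z ^ 3 + b * 1 ^ 3 : ℤ) : ℚ_[p]),
    ?_, x, 1, z, 1, by simpa [hd] using hdne, rfl⟩
  rw [Metric.mem_ball]
  have hnum : ‖((a * x ^ 3 + b : ℤ) : ℚ_[p]) - c * ((d : ℤ) : ℚ_[p])‖ < ε * ((p : ℝ)⁻¹) ^ m := by
    have hcast : ((((a * x ^ 3 + b : ℤ) : ℤ_[p]) - S : ℤ_[p]) : ℚ_[p])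
        = ((a * x ^ 3 + b : ℤ) : ℚ_[p]) - c * ((d : ℤ) : ℚ_[p]) := by
      push_cast
      ring
    rw [← hcast, ← PadicInt.norm_def]
    exact hx
  have hsimp : (a * x ^ 3 + b * 1 ^ 3 : ℤ) = a * x ^ 3 + b := by ring
  have hsimp2 : (a * z ^ 3 + b * 1 ^ 3 : ℤ) = d := by rw [hd]; ring
  rw [hsimp, hsimp2]
  have key : ((a * x ^ 3 + b : ℤ) : ℚ_[p]) / ((d : ℤ) : ℚ_[p]) - c
      = (((a * x ^ 3 + b : ℤ) : ℚ_[p]) - c * ((d : ℤ) : ℚ_[p])) / ((d : ℤ) : ℚ_[p]) := by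
    field_simp
  rw [dist_eq_norm, key, norm_div, hdQnorm]
  rw [div_lt_iff₀ hpmpos]
  exact hnum
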